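/- If condition (ii) of the PE equivalence holds (γ₁ ≤ Σ_{k=t+1}^{t+T} ψ(x_kᵀθ/‖θ‖) ≤ γ₂ for all t and nonzero θ), then condition (i) holds with the explicit class-K∞ functions α(r) = γ₁·f_ψ(r) and β(r) = γ₂/f_ψ(1/r) for r > 0, β(0) = 0. -/

import Mathlib

open Finset Filter

/-- A class-K∞ function: continuous on [0,∞), zero at zero, strictly increasing
on [0,∞), and tending to ∞ at ∞. -/
def ClassKInf (f : ℝ → ℝ) : Prop :=
  ContinuousOn f (Set.Ici 0) ∧ f 0 = 0 ∧ StrictMonoOn f (Set.Ici 0) ∧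
    Tendsto f atTop atTop

/-- Dot product on ℝⁿ. -/
def dot {n : ℕ} (x θ : Fin n → ℝ) : ℝ := ∑ i, x i * θ i

/-- `N` is a norm on ℝⁿ. -/
def IsNorm {n : ℕ} (N : (Fin n → ℝ) → ℝ) : Prop :=
  (∀ x, 0 ≤ N x) ∧ (∀ x, N x = 0 ↔ x = 0) ∧
    (∀ (a : ℝ) (x), N (a • x) = |a| * N x) ∧ (∀ x y, N (x + y) ≤ N x + N y)

/-- if condition (ii) of the PE equivalence holds, then condition (i)
holds with the explicit choices α(r) = γ₁·f_ψ(r) and β(r) = γ₂/f_ψ(1/r), β(0)=0. -/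
theorem stmt_4 {n : ℕ} (ψ : ℝ → ℝ) (fψ : ℝ → ℝ)
    (hcont : Continuous ψ) (hnn : ∀ e, 0 ≤ ψ e)
    (hpd : ∀ e, ψ e = 0 ↔ e = 0) (hsym : ∀ e, ψ (-e) = ψ e)
    (hf : ClassKInf fψ)
    (hGH : ∀ (e r : ℝ), r ≠ 0 → fψ (1 / |r|) * ψ (r * e) ≤ ψ e)
    (x : ℕ → Fin n → ℝ) (T : ℕ) (hT : 0 < T)
    (N : (Fin n → ℝ) → ℝ) (hN : IsNorm N)
    (γ₁ γ₂ : ℝ) (hγ₁ : 0 < γ₁) (hγ₂ : 0 < γ₂)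
    (hii : ∀ (t : ℕ) (θ : Fin n → ℝ), θ ≠ 0 →
      γ₁ ≤ ∑ k ∈ Finset.Icc (t + 1) (t + T), ψ (dot (x k) θ / N θ) ∧
      ∑ k ∈ Finset.Icc (t + 1) (t + T), ψ (dot (x k) θ / N θ) ≤ γ₂)
    (α β : ℝ → ℝ)
    (hα : ∀ r : ℝ, α r = γ₁ * fψ r)
    (hβ0 : β 0 = 0) (hβ : ∀ r : ℝ, r ≠ 0 → β r = γ₂ / fψ (1 / r)) :
    ClassKInf α ∧ ClassKInf β ∧
      ∀ (t : ℕ) (θ : Fin n → ℝ),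
        α (N θ) ≤ ∑ k ∈ Finset.Icc (t + 1) (t + T), ψ (dot (x k) θ) ∧
        ∑ k ∈ Finset.Icc (t + 1) (t + T), ψ (dot (x k) θ) ≤ β (N θ) := by
  obtain ⟨hfc, hf0, hfmono, hftop⟩ := hf
  have hfpos : ∀ r : ℝ, 0 < r → 0 < fψ r := fun r hr => by
    have := hfmono (Set.self_mem_Ici) (Set.mem_Ici.2 hr.le) hr
    simpa [hf0] using this
  have hψ0 : ψ 0 = 0 := (hpd 0).2 rfl
  have hαK : ClassKInf α := by
    rw [show α = fun r => γ₁ * fψ r from funext hα]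
    refine ⟨continuousOn_const.mul hfc, by simp [hf0], ?_, ?_⟩
    · exact fun a ha b hb hab => mul_lt_mul_of_pos_left (hfmono ha hb hab) hγ₁
    · exact hftop.const_mul_atTop hγ₁
  have hβpos : ∀ r : ℝ, 0 < r → β r = γ₂ / fψ (1 / r) := fun r hr => hβ r hr.ne'
  have hβK : ClassKInf β := by
    refine ⟨?_, hβ0, ?_, ?_⟩
    · intro a ha
      rcases eq_or_lt_of_le (Set.mem_Ici.1 ha) with h0 | h0
      · rw [← h0, ← continuousWithinAt_Ioi_iff_Ici]
        have h1 : Tendsto (fun r : ℝ => γ₂ / fψ (1 / r)) (nhdsWithin 0 (Set.Ioi 0)) (nhds 0) := by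
          have hinv : Tendsto (fun r : ℝ => 1 / r) (nhdsWithin 0 (Set.Ioi 0)) atTop := by
            simpa [one_div] using tendsto_inv_nhdsGT_zero
          have hft : Tendsto (fun r : ℝ => fψ (1 / r)) (nhdsWithin 0 (Set.Ioi 0)) atTop :=
            hftop.comp hinv
          exact (tendsto_const_nhds (x := γ₂)).div_atTop hft
        have h2 : β =ᶠ[nhdsWithin 0 (Set.Ioi 0)] fun r : ℝ => γ₂ / fψ (1 / r) := by
          filter_upwards [self_mem_nhdsWithin] with r hr
          exact hβpos r hr
        unfold ContinuousWithinAt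
        rw [hβ0]
        exact h1.congr' h2.symm
      · have hg : ContinuousAt (fun r : ℝ => γ₂ / fψ (1 / r)) a := by
          have hinv : ContinuousAt (fun r : ℝ => 1 / r) a := by
            simpa [one_div] using (continuousAt_inv₀ h0.ne')
          have hfa : ContinuousAt fψ (1 / a) :=
            hfc.continuousAt (Ici_mem_nhds (by positivity))
          exact continuousAt_const.div (hfa.comp hinv) (hfpos _ (by positivity)).ne'
        have heq : β =ᶠ[nhds a] fun r : ℝ => γ₂ / fψ (1 / r) := by
          filter_upwards [Ioi_mem_nhds h0] with r hr
          exact hβpos r hr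
        exact (hg.congr heq.symm).continuousWithinAt
    · intro a ha b hb hab
      rcases eq_or_lt_of_le (Set.mem_Ici.1 ha) with h0 | h0
      · rw [← h0, hβ0, hβpos b (h0 ▸ hab)]
        exact div_pos hγ₂ (hfpos _ (one_div_pos.2 (h0 ▸ hab)))
      · have hb0 : 0 < b := h0.trans hab
        rw [hβpos a h0, hβpos b hb0]
        apply div_lt_div_of_pos_left hγ₂ (hfpos _ (one_div_pos.2 hb0))
        exact hfmono (Set.mem_Ici.2 (one_div_pos.2 hb0).le) (Set.mem_Ici.2 (one_div_pos.2 h0).le)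
          (one_div_lt_one_div_of_lt h0 hab)
    · have h1 : Tendsto (fun r : ℝ => fψ (1 / r)) atTop (nhdsWithin 0 (Set.Ioi 0)) := by
        rw [tendsto_nhdsWithin_iff]
        constructor
        · have : Tendsto (fun r : ℝ => (1 : ℝ) / r) atTop (nhdsWithin 0 (Set.Ici 0)) := by
            rw [tendsto_nhdsWithin_iff]
            exact ⟨by simpa [one_div] using tendsto_inv_atTop_zero,
              eventually_atTop.2 ⟨1, fun r hr => Set.mem_Ici.2 (by positivity)⟩⟩
          simpa [hf0, Function.comp_def] using (hfc.continuousWithinAt (Set.self_mem_Ici)).tendsto.comp this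
        · filter_upwards [eventually_gt_atTop (0 : ℝ)] with r hr
          exact hfpos _ (by positivity)
      have h2 : Tendsto (fun r : ℝ => γ₂ / fψ (1 / r)) atTop atTop := by
        simp only [div_eq_mul_inv]
        exact h1.inv_tendsto_nhdsGT_zero.const_mul_atTop hγ₂
      apply h2.congr'
      filter_upwards [eventually_gt_atTop (0 : ℝ)] with r hr
      exact (hβpos r hr).symm
  refine ⟨hαK, hβK, fun t θ => ?_⟩
  by_cases hθ : θ = 0
  · subst hθ
    have hN0 : N 0 = 0 := (hN.2.1 0).2 rfl
    simp [hN0, hα, hf0, hβ0, dot, hψ0]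
  · have hNθ : 0 < N θ := lt_of_le_of_ne (hN.1 θ) (fun h => hθ ((hN.2.1 θ).1 h.symm))
    obtain ⟨hlo, hhi⟩ := hii t θ hθ
    constructor
    · rw [hα]
      have key : ∀ k, fψ (N θ) * ψ (dot (x k) θ / N θ) ≤ ψ (dot (x k) θ) := by
        intro k
        have := hGH (dot (x k) θ) (1 / N θ) (by positivity)
        rw [abs_of_pos (by positivity : (0:ℝ) < 1 / N θ), one_div_one_div] at this
        calc fψ (N θ) * ψ (dot (x k) θ / N θ)
            = fψ (N θ) * ψ (1 / N θ * dot (x k) θ) := by rw [one_div, inv_mul_eq_div]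
          _ ≤ ψ (dot (x k) θ) := this
      calc γ₁ * fψ (N θ) ≤ (∑ k ∈ Finset.Icc (t + 1) (t + T), ψ (dot (x k) θ / N θ)) * fψ (N θ) :=
            mul_le_mul_of_nonneg_right hlo (hfpos _ hNθ).le
        _ = ∑ k ∈ Finset.Icc (t + 1) (t + T), fψ (N θ) * ψ (dot (x k) θ / N θ) := by
            rw [Finset.sum_mul]; exact Finset.sum_congr rfl fun k _ => mul_comm _ _
        _ ≤ ∑ k ∈ Finset.Icc (t + 1) (t + T), ψ (dot (x k) θ) :=
            Finset.sum_le_sum fun k _ => key k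
    · rw [hβpos _ hNθ]
      rw [le_div_iff₀ (hfpos _ (by positivity))]
      have key : ∀ k, fψ (1 / N θ) * ψ (dot (x k) θ) ≤ ψ (dot (x k) θ / N θ) := by
        intro k
        have := hGH (dot (x k) θ / N θ) (N θ) hNθ.ne'
        rwa [abs_of_pos hNθ, mul_div_cancel₀ _ hNθ.ne'] at this
      calc (∑ k ∈ Finset.Icc (t + 1) (t + T), ψ (dot (x k) θ)) * fψ (1 / N θ)
          = ∑ k ∈ Finset.Icc (t + 1) (t + T), fψ (1 / N θ) * ψ (dot (x k) θ) := by
            rw [Finset.sum_mul]; exact Finset.sum_congr rfl fun k _ => mul_comm _ _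
        _ ≤ ∑ k ∈ Finset.Icc (t + 1) (t + T), ψ (dot (x k) θ / N θ) :=
            Finset.sum_le_sum fun k _ => key k
        _ ≤ γ₂ := hhi
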